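/- Let V ∈ ℝ^{n×n} be orthogonal and let 0 < r < 1 be such that ‖V − I‖₂ < r. Suppose L ∈ ℝ^{n×n} is skew-symmetric with exp_m(L) = V and ‖L‖₂ ≤ π. Then ‖L‖₂ < r·√(1 − r²/4) / (1 − r²/2). (That is, the principal matrix logarithm of V satisfies this norm bound.) -/

import Mathlib

open Matrix

/-- Spectral norm (largest singular value) of a real matrix: the operator norm of the
induced linear map between Euclidean spaces. -/
noncomputable def sNorm {m n : Type*} [Fintype m] [Fintype n] [DecidableEq n]
    (A : Matrix m n ℝ) : ℝ :=
  ‖(Matrix.toEuclideanLin A).toContinuousLinearMap‖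

section Aux

open scoped Matrix.Norms.L2Operator

variable {n : ℕ}

lemma sNorm_eq_l2norm (A : Matrix (Fin n) (Fin n) ℝ) : sNorm A = ‖A‖ := rfl

lemma mulVec_map_re (M : Matrix (Fin n) (Fin n) ℝ) (z : Fin n → ℂ) (i : Fin n) :
    (((M.map Complex.ofReal) *ᵥ z) i).re = (M *ᵥ (fun j => (z j).re)) i := by
  simp [Matrix.mulVec, dotProduct, Complex.re_sum, Complex.mul_re]

lemma mulVec_map_im (M : Matrix (Fin n) (Fin n) ℝ) (z : Fin n → ℂ) (i : Fin n) :
    (((M.map Complex.ofReal) *ᵥ z) i).im = (M *ᵥ (fun j => (z j).im)) i := by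
  simp [Matrix.mulVec, dotProduct, Complex.im_sum, Complex.mul_im]

lemma sum_sq_mulVec_le (M : Matrix (Fin n) (Fin n) ℝ) (v : Fin n → ℝ) :
    ∑ i, ((M *ᵥ v) i)^2 ≤ ‖M‖^2 * ∑ j, (v j)^2 := by
  have h := M.l2_opNorm_mulVec ((WithLp.equiv 2 (Fin n → ℝ)).symm v)
  rw [EuclideanSpace.norm_eq, EuclideanSpace.norm_eq] at h
  simp only [WithLp.equiv_symm_apply, EuclideanSpace.equiv, Real.norm_eq_abs, sq_abs] at h
  have h1 : (0:ℝ) ≤ ∑ i, ((M *ᵥ v) i)^2 := Finset.sum_nonneg fun i _ => sq_nonneg _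
  have h2 : (0:ℝ) ≤ ∑ j, (v j)^2 := Finset.sum_nonneg fun i _ => sq_nonneg _
  calc ∑ i, ((M *ᵥ v) i)^2 = (Real.sqrt (∑ i, ((M *ᵥ v) i)^2))^2 := (Real.sq_sqrt h1).symm
    _ ≤ (‖M‖ * Real.sqrt (∑ j, (v j)^2))^2 := by
        apply pow_le_pow_left₀ (Real.sqrt_nonneg _)
        convert h using 3 <;> rfl
    _ = ‖M‖^2 * ∑ j, (v j)^2 := by rw [mul_pow, Real.sq_sqrt h2]

lemma norm_map_ofReal_le (M : Matrix (Fin n) (Fin n) ℝ) :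
    ‖M.map Complex.ofReal‖ ≤ ‖M‖ := by
  rw [Matrix.l2_opNorm_def]
  refine ContinuousLinearMap.opNorm_le_bound _ (norm_nonneg M) fun z => ?_
  show ‖(LinearMap.toContinuousLinearMap (toEuclideanLin (M.map Complex.ofReal))) z‖ ≤ ‖M‖ * ‖z‖
  have hz : ‖z‖ = Real.sqrt (∑ i, ‖z i‖^2) := EuclideanSpace.norm_eq z
  have hMz : ‖(toEuclideanLin (M.map Complex.ofReal)).toContinuousLinearMap z‖
      = Real.sqrt (∑ i, ‖((M.map Complex.ofReal) *ᵥ (fun j => z j)) i‖^2) := by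
    rw [EuclideanSpace.norm_eq]; rfl
  rw [hMz, hz]
  have key : ∑ i, ‖((M.map Complex.ofReal) *ᵥ (fun j => z j)) i‖^2
      ≤ ‖M‖^2 * ∑ i, ‖z i‖^2 := by
    have e1 : ∀ i, ‖((M.map Complex.ofReal) *ᵥ (fun j => z j)) i‖^2
        = ((M *ᵥ fun j => (z j).re) i)^2 + ((M *ᵥ fun j => (z j).im) i)^2 := by
      intro i
      rw [Complex.sq_norm, Complex.normSq_apply, mulVec_map_re, mulVec_map_im]
      ring
    have e2 : ∀ i, ‖z i‖^2 = ((z i).re)^2 + ((z i).im)^2 := by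
      intro i; rw [Complex.sq_norm, Complex.normSq_apply]; ring
    simp only [e1, e2, Finset.sum_add_distrib, mul_add]
    exact add_le_add (sum_sq_mulVec_le M _) (sum_sq_mulVec_le M _)
  calc Real.sqrt (∑ i, ‖((M.map Complex.ofReal) *ᵥ (fun j => z j)) i‖^2)
      ≤ Real.sqrt (‖M‖^2 * ∑ i, ‖z i‖^2) := Real.sqrt_le_sqrt key
    _ = ‖M‖ * Real.sqrt (∑ i, ‖z i‖^2) := by
        rw [Real.sqrt_mul (sq_nonneg _), Real.sqrt_sq (norm_nonneg _)]

lemma norm_le_norm_map_ofReal (M : Matrix (Fin n) (Fin n) ℝ) :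
    ‖M‖ ≤ ‖M.map Complex.ofReal‖ := by
  rw [Matrix.l2_opNorm_def]
  refine ContinuousLinearMap.opNorm_le_bound _ (norm_nonneg _) fun v => ?_
  show ‖(LinearMap.toContinuousLinearMap (toEuclideanLin M)) v‖ ≤ ‖M.map Complex.ofReal‖ * ‖v‖
  set z : EuclideanSpace ℂ (Fin n) := (WithLp.equiv 2 (Fin n → ℂ)).symm (fun j => (v j : ℂ)) with hzdef
  have hz : ‖z‖ = ‖v‖ := by
    rw [EuclideanSpace.norm_eq, EuclideanSpace.norm_eq]
    congr 1
    refine Finset.sum_congr rfl fun i _ => ?_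
    simp [hzdef]
  have h := (M.map Complex.ofReal).l2_opNorm_mulVec z
  have hcoord : ∀ i, ((M.map Complex.ofReal) *ᵥ (fun j => z j)) i = ((M *ᵥ fun j => v j) i : ℂ) := by
    intro i
    simp [Matrix.mulVec, dotProduct, hzdef]
  have hnorm_eq : ‖(EuclideanSpace.equiv (Fin n) ℂ).symm ((M.map Complex.ofReal) *ᵥ (fun j => z j))‖
      = ‖(toEuclideanLin M).toContinuousLinearMap v‖ := by
    rw [EuclideanSpace.norm_eq, EuclideanSpace.norm_eq]
    congr 1
    refine Finset.sum_congr rfl fun i _ => ?_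
    have : ((toEuclideanLin M).toContinuousLinearMap v) i = (M *ᵥ fun j => v j) i := rfl
    rw [this]
    simp [hcoord i]
  rw [← hnorm_eq]
  calc ‖(EuclideanSpace.equiv (Fin n) ℂ).symm ((M.map Complex.ofReal) *ᵥ (fun j => z j))‖
      ≤ ‖M.map Complex.ofReal‖ * ‖z‖ := h
    _ = ‖M.map Complex.ofReal‖ * ‖v‖ := by rw [hz]

lemma norm_exp_sub_one' (t : Real) :
    ‖Complex.exp ((t:Complex) * Complex.I) - 1‖ = 2 * |Real.sin (t/2)| := by
  have h1 : Complex.exp ((t:Complex) * Complex.I) - 1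
      = Complex.ofReal (Real.cos t - 1) + Complex.ofReal (Real.sin t) * Complex.I := by
    rw [Complex.exp_mul_I, ← Complex.ofReal_cos, ← Complex.ofReal_sin]
    push_cast; ring
  have hc := Real.cos_two_mul (t/2)
  rw [show 2*(t/2) = t by ring] at hc
  have hsc := Real.sin_sq_add_cos_sq (t/2)
  have key : (Real.cos t - 1)*(Real.cos t - 1) + Real.sin t * Real.sin t
      = (2 * |Real.sin (t/2)|)^2 := by
    nlinarith [Real.sin_sq_add_cos_sq t, sq_abs (Real.sin (t/2))]
  rw [h1, Complex.norm_def, Complex.normSq_apply]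
  have hre : (Complex.ofReal (Real.cos t - 1) + Complex.ofReal (Real.sin t) * Complex.I).re
      = Real.cos t - 1 := by simp [Complex.cos_ofReal_re]
  have him : (Complex.ofReal (Real.cos t - 1) + Complex.ofReal (Real.sin t) * Complex.I).im
      = Real.sin t := by simp [Complex.sin_ofReal_re]
  rw [hre, him, key, Real.sqrt_sq (by positivity)]

lemma key_real {r t : ℝ} (hr0 : 0 < r) (hr1 : r < 1) (ht0 : 0 ≤ t) (htpi : t ≤ Real.pi)
    (h : 2 * |Real.sin (t/2)| < r) :
    t < r * Real.sqrt (1 - r^2/4) / (1 - r^2/2) := by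
  have pi_pos := Real.pi_pos
  set s := Real.arcsin (r/2) with hs
  have hr2 : (0:ℝ) < r/2 := by linarith
  have hr2' : r/2 ≤ 1 := by linarith
  have hsin_s : Real.sin s = r/2 := Real.sin_arcsin (by linarith) (by linarith)
  have hs0 : 0 < s := Real.arcsin_pos.mpr hr2
  have hs4 : s < Real.pi/4 := by
    by_contra hcon
    push_neg at hcon
    have h1 : Real.sin (Real.pi/4) ≤ Real.sin s := by
      apply Real.strictMonoOn_sin.monotoneOn
      · constructor <;> [linarith; linarith]
      · exact ⟨by linarith [Real.arcsin_le_pi_div_two (r/2)],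
          Real.arcsin_le_pi_div_two (r/2)⟩
      · exact hcon
    rw [Real.sin_pi_div_four, hsin_s] at h1
    nlinarith [Real.sq_sqrt (by norm_num : (2:ℝ) ≥ 0), Real.sqrt_nonneg 2]
  have hsin_t : |Real.sin (t/2)| = Real.sin (t/2) := by
    rw [abs_of_nonneg]
    exact Real.sin_nonneg_of_nonneg_of_le_pi (by linarith) (by linarith)
  have ht2 : t/2 < s := by
    by_contra hcon
    push_neg at hcon
    have h1 : Real.sin s ≤ Real.sin (t/2) := by
      apply Real.strictMonoOn_sin.monotoneOn
      · exact ⟨by linarith, by linarith [Real.arcsin_le_pi_div_two (r/2)]⟩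
      · constructor <;> linarith
      · exact hcon
    rw [hsin_s] at h1
    rw [hsin_t] at h
    linarith
  have htan : 2*s < Real.tan (2*s) := Real.lt_tan (by linarith) (by linarith)
  have hcos_s : Real.cos s = Real.sqrt (1 - r^2/4) := by
    rw [hs, Real.cos_arcsin, show ((r/2)^2 : ℝ) = r^2/4 by ring]
  have htan_eq : Real.tan (2*s) = r * Real.sqrt (1 - r^2/4) / (1 - r^2/2) := by
    rw [Real.tan_eq_sin_div_cos]
    have hsin2 : Real.sin (2*s) = r * Real.sqrt (1 - r^2/4) := by
      rw [Real.sin_two_mul, hsin_s, hcos_s]; ring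
    have hcos2 : Real.cos (2*s) = 1 - r^2/2 := by
      rw [Real.cos_two_mul, hcos_s, Real.sq_sqrt (by nlinarith)]
      ring
    rw [hsin2, hcos2]
  linarith [htan_eq ▸ htan]

lemma rhs_pos {r : ℝ} (hr0 : 0 < r) (hr1 : r < 1) :
    0 < r * Real.sqrt (1 - r^2/4) / (1 - r^2/2) := by
  apply div_pos
  · apply mul_pos hr0
    apply Real.sqrt_pos.mpr
    nlinarith
  · nlinarith

set_option maxHeartbeats 1000000 in
lemma main_aux {n : ℕ} (V : Matrix (Fin n) (Fin n) ℝ) (r : ℝ) (hr0 : 0 < r) (hr1 : r < 1)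
    (hVnorm : sNorm (V - 1) < r)
    (L : Matrix (Fin n) (Fin n) ℝ) (hLskew : Lᵀ = -L)
    (hLexp : NormedSpace.exp L = V) (hLnorm : sNorm L ≤ Real.pi) :
    sNorm L < r * Real.sqrt (1 - r ^ 2 / 4) / (1 - r ^ 2 / 2) := by
  rw [sNorm_eq_l2norm] at hVnorm hLnorm ⊢
  by_cases hL0 : ‖L‖ = 0
  · rw [hL0]; exact rhs_pos hr0 hr1
  have hn : 0 < n := by
    by_contra h0
    push_neg at h0
    have hn0 : n = 0 := by omega
    subst hn0
    exact hL0 (by rw [Subsingleton.elim L 0, norm_zero])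
  haveI : Nonempty (Fin n) := Fin.pos_iff_nonempty.mp hn
  haveI hnt : Nontrivial (Matrix (Fin n) (Fin n) ℂ) := inferInstance
  letI : CStarAlgebra (Matrix (Fin n) (Fin n) ℂ) := Matrix.instCStarAlgebra
  set Bc := L.map Complex.ofReal with hBc
  set Vc := V.map Complex.ofReal with hVc
  -- star of Bc
  have hstar : star Bc = -Bc := by
    have h1 : star Bc = Lᵀ.map Complex.ofReal := by
      ext i j
      simp [hBc, Matrix.star_eq_conjTranspose, Matrix.conjTranspose_apply, Matrix.map_apply,
        Matrix.transpose_apply]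
    rw [h1, hLskew]
    ext i j
    simp [hBc, Matrix.map_apply]
  haveI : IsStarNormal Bc := ⟨by rw [Commute, SemiconjBy, hstar]; simp⟩
  -- exp transported
  have hexpc : NormedSpace.exp Bc = Vc := by
    set F : Matrix (Fin n) (Fin n) ℝ →ₐ[ℝ] Matrix (Fin n) (Fin n) ℂ :=
      (AlgHom.mapMatrix (m := Fin n) Complex.ofRealAm) with hF
    have hcont : Continuous F := LinearMap.continuous_of_finiteDimensional F.toLinearMap
    letI : NormedAlgebra ℚ (Matrix (Fin n) (Fin n) ℝ) := .restrictScalars ℚ ℝ _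
    have h1 := NormedSpace.map_exp F hcont L
    rw [hLexp] at h1
    have h2 : F V = Vc := rfl
    have h3 : F L = Bc := rfl
    rw [h2, h3] at h1
    rw [h1]
  -- spectral radius attained
  obtain ⟨μ, hμmem, hμrad⟩ := spectrum.exists_nnnorm_eq_spectralRadius Bc
  have hrad : spectralRadius ℂ Bc = ‖Bc‖₊ := IsStarNormal.spectralRadius_eq_nnnorm Bc
  have hμnorm : ‖μ‖ = ‖Bc‖ := by
    have h := hμrad.trans hrad
    have := congrArg ENNReal.toReal h
    simpa using this
  -- μ is purely imaginary
  have hsa : IsSelfAdjoint (Complex.I • Bc) := by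
    show star (Complex.I • Bc) = Complex.I • Bc
    rw [star_smul, hstar]
    simp [Complex.conj_I]
  have hunit : IsUnit (Complex.I) := isUnit_iff_ne_zero.mpr Complex.I_ne_zero
  have hμI : Complex.I * μ ∈ spectrum ℂ (Complex.I • Bc) := by
    rw [show Complex.I • Bc = hunit.unit • Bc from rfl, spectrum.unit_smul_eq_smul]
    exact ⟨μ, hμmem, rfl⟩
  have hre := hsa.mem_spectrum_eq_re hμI
  set θ : ℝ := -(Complex.I * μ).re with hθ
  have hIμ : Complex.I * μ = -(θ:ℂ) := by rw [hθ]; push_cast; simpa using hre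
  have hμθ : μ = (θ:ℂ) * Complex.I := by
    have hIsq := Complex.I_sq
    linear_combination (-Complex.I) * hIμ + μ * hIsq
  have hθabs : |θ| = ‖Bc‖ := by
    rw [← hμnorm, hμθ]
    simp [Complex.norm_mul, Complex.norm_I, Complex.norm_real]
  -- exp spectrum membership
  have hexpmem : NormedSpace.exp μ ∈ spectrum ℂ (NormedSpace.exp Bc) :=
    spectrum.exp_mem_exp Bc hμmem
  rw [hexpc] at hexpmem
  have hexpμ : NormedSpace.exp μ = Complex.exp ((θ:ℂ) * Complex.I) := by
    rw [hμθ]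
    exact (congrFun Complex.exp_eq_exp_ℂ _).symm
  -- shift by 1
  have hmem1 : Complex.exp ((θ:ℂ) * Complex.I) - 1 ∈ spectrum ℂ (Vc - 1) := by
    rw [← hexpμ]
    rw [spectrum.mem_iff] at hexpmem ⊢
    convert hexpmem using 2
    rw [map_sub, _root_.map_one]
    abel
  have hb1 : ‖Complex.exp ((θ:ℂ) * Complex.I) - 1‖ ≤ ‖Vc - 1‖ :=
    spectrum.norm_le_norm_of_mem hmem1
  have hVc1 : Vc - 1 = (V - 1).map Complex.ofReal := by
    ext i j
    simp [hVc, Matrix.sub_apply, Matrix.map_apply, Matrix.one_apply, apply_ite Complex.ofReal]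
  have hlt : 2 * |Real.sin (θ/2)| < r := by
    have h2 := norm_exp_sub_one' θ
    have h3 : ‖Vc - 1‖ ≤ ‖V - 1‖ := by rw [hVc1]; exact norm_map_ofReal_le _
    linarith [hb1, h2 ▸ hb1]
  -- wrap up
  have h1 : ‖L‖ ≤ |θ| := hθabs ▸ norm_le_norm_map_ofReal L
  have h2 : |θ| ≤ Real.pi := le_trans (hθabs ▸ norm_map_ofReal_le L) hLnorm
  have habs : |Real.sin (|θ|/2)| = |Real.sin (θ/2)| := by
    rcases abs_cases θ with ⟨h, _⟩ | ⟨h, _⟩ <;> rw [h] <;>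
      simp [neg_div, Real.sin_neg, abs_neg]
  have hkey := key_real hr0 hr1 (abs_nonneg θ) h2 (by rw [habs]; exact hlt)
  linarith

end Aux

/-- if `V` is orthogonal with `‖V − I‖₂ < r < 1` and `L` is the principal
matrix logarithm of `V` (skew-symmetric, `exp_m(L) = V`, `‖L‖₂ ≤ π`), then
`‖L‖₂ < r√(1−r²/4)/(1−r²/2)`. -/
theorem stmt_7 (n : ℕ) (V : Matrix (Fin n) (Fin n) ℝ)
    (hV : Vᵀ * V = 1 ∧ V * Vᵀ = 1) (r : ℝ) (hr0 : 0 < r) (hr1 : r < 1)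
    (hVnorm : sNorm (V - 1) < r)
    (L : Matrix (Fin n) (Fin n) ℝ) (hLskew : Lᵀ = -L)
    (hLexp : NormedSpace.exp L = V) (hLnorm : sNorm L ≤ Real.pi) :
    sNorm L < r * Real.sqrt (1 - r ^ 2 / 4) / (1 - r ^ 2 / 2) :=
  main_aux V r hr0 hr1 hVnorm L hLskew hLexp hLnorm
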